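/- Let b ≥ 0 and let m1, m0 : ℝ → ℝ satisfy the smoothness assumption with constant b on [0,1] and the treatment-cannot-hurt condition m1(v) ≤ m0(v) for all v ∈ [0,1]. Let 0 ≤ p0l ≤ p' ≤ p ≤ p1u ≤ 1 and let Δpl be a constant with 0 < Δpl ≤ p − p', and set ΔY := ∫_{p'}^{p} (m1(v) − m0(v)) dv. Then ∫_0^1 (m1(v) − m0(v)) dv ≥ ( ΔY − (2b/3)·(p1u³ − p0l³) + b·(p1u² − p0l²) − b·(p1u − p0l) ) / Δpl. -/

import Mathlib

open Set intervalIntegral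

private lemma abs_integral_eval (u : ℝ) (hu0 : 0 ≤ u) (hu1 : u ≤ 1) :
    (∫ v in (0:ℝ)..1, |u - v|) = u ^ 2 - u + 1 / 2 := by
  have hcont : Continuous fun v : ℝ => |u - v| := (continuous_const.sub continuous_id).abs
  have hA : (∫ v in (0:ℝ)..u, |u - v|) = u ^ 2 / 2 := by
    have h1 : (∫ v in (0:ℝ)..u, |u - v|) = ∫ v in (0:ℝ)..u, (u - v) := by
      apply intervalIntegral.integral_congr
      intro v hv
      rw [Set.uIcc_of_le hu0] at hv
      show |u - v| = u - v
      exact abs_of_nonneg (by linarith [hv.2])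
    rw [h1, intervalIntegral.integral_sub intervalIntegrable_const
      (intervalIntegrable_id (μ := MeasureTheory.volume)), intervalIntegral.integral_const,
      integral_id]
    simp only [smul_eq_mul]
    ring
  have hB : (∫ v in u..(1:ℝ), |u - v|) = 1 / 2 - u + u ^ 2 / 2 := by
    have h1 : (∫ v in u..(1:ℝ), |u - v|) = ∫ v in u..(1:ℝ), (v - u) := by
      apply intervalIntegral.integral_congr
      intro v hv
      rw [Set.uIcc_of_le hu1] at hv
      show |u - v| = v - u
      rw [abs_sub_comm]
      exact abs_of_nonneg (by linarith [hv.1])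
    rw [h1, intervalIntegral.integral_sub (intervalIntegrable_id (μ := MeasureTheory.volume))
      intervalIntegrable_const, intervalIntegral.integral_const, integral_id]
    simp only [smul_eq_mul]
    ring
  have hsum : (∫ v in (0:ℝ)..u, |u - v|) + (∫ v in u..(1:ℝ), |u - v|)
      = ∫ v in (0:ℝ)..1, |u - v| := intervalIntegral.integral_add_adjacent_intervals
    (hcont.intervalIntegrable 0 u) (hcont.intervalIntegrable u 1)
  rw [← hsum, hA, hB]
  ring

private lemma poly_integral_eval (a c : ℝ) :
    (∫ u in a..c, (u ^ 2 - u + 1 / 2)) = (c ^ 3 - a ^ 3) / 3 - (c ^ 2 - a ^ 2) / 2 + (c - a) / 2 := by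
  rw [intervalIntegral.integral_add
        (((continuous_pow 2).intervalIntegrable a c).sub (intervalIntegrable_id (μ := MeasureTheory.volume)))
        intervalIntegrable_const,
      intervalIntegral.integral_sub ((continuous_pow 2).intervalIntegrable a c)
        (intervalIntegrable_id (μ := MeasureTheory.volume)),
      integral_pow, integral_id, intervalIntegral.integral_const]
  push_cast
  simp only [smul_eq_mul]
  ring

private lemma G_mono {x y : ℝ} (hxy : x ≤ y) :
    x ^ 3 / 3 - x ^ 2 / 2 + x / 2 ≤ y ^ 3 / 3 - y ^ 2 / 2 + y / 2 := by
  have h : 0 ≤ y - x := by linarith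
  nlinarith [mul_nonneg h (sq_nonneg (x + y - 3 / 2)), mul_nonneg h (sq_nonneg x),
    mul_nonneg h (sq_nonneg y)]

/-- ATE lower bound with misreporting under smoothness and the
treatment-cannot-hurt condition `m1 ≤ m0` on `[0,1]`:
`ATE ≥ (ΔY - (2b/3)(p1u³ - p0l³) + b(p1u² - p0l²) - b(p1u - p0l)) / Δpl`. -/
theorem ate_lower_bound_misreporting_treatment_cannot_hurt
    (b : ℝ) (hb : 0 ≤ b) (m1 m0 : ℝ → ℝ)
    (hm1 : ∀ v1 ∈ Set.Icc (0:ℝ) 1, ∀ v2 ∈ Set.Icc (0:ℝ) 1, |m1 v1 - m1 v2| ≤ b * |v1 - v2|)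
    (hm0 : ∀ v1 ∈ Set.Icc (0:ℝ) 1, ∀ v2 ∈ Set.Icc (0:ℝ) 1, |m0 v1 - m0 v2| ≤ b * |v1 - v2|)
    (hTCH : ∀ v ∈ Set.Icc (0:ℝ) 1, m1 v ≤ m0 v)
    (p0l p' p p1u : ℝ) (h0 : 0 ≤ p0l) (h1 : p0l ≤ p') (h2 : p' ≤ p) (h3 : p ≤ p1u)
    (h4 : p1u ≤ 1)
    (Δpl : ℝ) (hΔpl0 : 0 < Δpl) (hΔpl : Δpl ≤ p - p')
    (ΔY : ℝ) (hΔY : ΔY = ∫ v in p'..p, (m1 v - m0 v)) :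
    (∫ v in (0:ℝ)..1, (m1 v - m0 v)) ≥
      (ΔY - (2 * b / 3) * (p1u ^ 3 - p0l ^ 3) + b * (p1u ^ 2 - p0l ^ 2)
        - b * (p1u - p0l)) / Δpl := by
  have hp'0 : (0:ℝ) ≤ p' := le_trans h0 h1
  have hp1 : p ≤ 1 := le_trans h3 h4
  have hp'mem : p' ∈ Icc (0:ℝ) 1 := ⟨hp'0, le_trans h2 hp1⟩
  have hpmem : p ∈ Icc (0:ℝ) 1 := ⟨le_trans hp'0 h2, hp1⟩
  set f : ℝ → ℝ := fun v => m1 v - m0 v with hfdef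
  -- Lipschitz bound for f
  have hLip : ∀ u ∈ Icc (0:ℝ) 1, ∀ v ∈ Icc (0:ℝ) 1, |f u - f v| ≤ 2 * b * |u - v| := by
    intro u hu v hv
    obtain ⟨ha1, ha2⟩ := abs_le.mp (hm1 u hu v hv)
    obtain ⟨hc1, hc2⟩ := abs_le.mp (hm0 u hu v hv)
    have hgoal : |(m1 u - m0 u) - (m1 v - m0 v)| ≤ 2 * b * |u - v| := by
      rw [abs_le]
      constructor <;> linarith
    exact hgoal
  -- continuity of f on [0,1]
  have hcont : ContinuousOn f (Icc (0:ℝ) 1) := by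
    have hl : LipschitzOnWith (Real.toNNReal (2 * b)) f (Icc (0:ℝ) 1) := by
      rw [lipschitzOnWith_iff_dist_le_mul]
      intro x hx y hy
      rw [Real.dist_eq, Real.dist_eq, Real.coe_toNNReal _ (by linarith)]
      exact hLip x hx y hy
    exact hl.continuousOn
  -- integrability helper
  have hInt : ∀ a ∈ Icc (0:ℝ) 1, ∀ c ∈ Icc (0:ℝ) 1,
      IntervalIntegrable f MeasureTheory.volume a c := by
    intro a ha c hc
    apply (hcont.mono _).intervalIntegrable
    have ha' : a ∈ uIcc (0:ℝ) 1 := by rw [Set.uIcc_of_le zero_le_one]; exact ha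
    have hc' : c ∈ uIcc (0:ℝ) 1 := by rw [Set.uIcc_of_le zero_le_one]; exact hc
    have := Set.uIcc_subset_uIcc ha' hc'
    rwa [Set.uIcc_of_le (zero_le_one : (0:ℝ) ≤ 1)] at this
  have hInt01 : IntervalIntegrable f MeasureTheory.volume 0 1 :=
    hInt 0 ⟨le_refl 0, zero_le_one⟩ 1 ⟨zero_le_one, le_refl 1⟩
  set I : ℝ := ∫ v in (0:ℝ)..1, f v with hIdef
  -- I ≤ 0
  have hI0 : I ≤ 0 := by
    have hpos : 0 ≤ ∫ v in (0:ℝ)..1, (-(f v)) := by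
      apply intervalIntegral.integral_nonneg zero_le_one
      intro u hu
      have : m1 u ≤ m0 u := hTCH u hu
      show 0 ≤ -(m1 u - m0 u)
      linarith
    rw [intervalIntegral.integral_neg] at hpos
    rw [hIdef]
    linarith
  -- pointwise key bound
  have key : ∀ u ∈ Icc (0:ℝ) 1, f u - I ≤ 2 * b * (u ^ 2 - u + 1 / 2) := by
    intro u hu
    have e1 : f u - I = ∫ v in (0:ℝ)..1, (f u - f v) := by
      rw [intervalIntegral.integral_sub intervalIntegrable_const hInt01,
        intervalIntegral.integral_const]
      simp
      exact hIdef
    have e2 : (∫ v in (0:ℝ)..1, (f u - f v)) ≤ ∫ v in (0:ℝ)..1, 2 * b * |u - v| := by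
      apply intervalIntegral.integral_mono_on zero_le_one
        (intervalIntegrable_const.sub hInt01)
        ((continuous_const.mul (continuous_const.sub continuous_id).abs).intervalIntegrable 0 1)
      intro v hv
      exact (le_abs_self _).trans (hLip u hu v hv)
    have e3 : (∫ v in (0:ℝ)..1, 2 * b * |u - v|) = 2 * b * (u ^ 2 - u + 1 / 2) := by
      rw [intervalIntegral.integral_const_mul, abs_integral_eval u hu.1 hu.2]
    rw [e1]
    exact e2.trans_eq e3
  -- integrate key over [p', p]
  have stepC : ΔY - (p - p') * I ≤ ∫ u in p'..p, 2 * b * (u ^ 2 - u + 1 / 2) := by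
    have e4 : ΔY - (p - p') * I = ∫ u in p'..p, (f u - I) := by
      rw [intervalIntegral.integral_sub (hInt p' hp'mem p hpmem) intervalIntegrable_const,
        intervalIntegral.integral_const, hΔY]
      simp only [smul_eq_mul]
      try ring
    rw [e4]
    apply intervalIntegral.integral_mono_on h2
      ((hInt p' hp'mem p hpmem).sub intervalIntegrable_const)
      ((continuous_const.mul ((continuous_pow 2).sub continuous_id |>.add
        continuous_const)).intervalIntegrable p' p)
    intro u hu
    exact key u ⟨le_trans hp'0 hu.1, le_trans hu.2 hp1⟩
  -- evaluate the polynomial integral and enlarge the interval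
  have e5 : (∫ u in p'..p, 2 * b * (u ^ 2 - u + 1 / 2)) ≤
      (2 * b / 3) * (p1u ^ 3 - p0l ^ 3) - b * (p1u ^ 2 - p0l ^ 2) + b * (p1u - p0l) := by
    rw [intervalIntegral.integral_const_mul, poly_integral_eval]
    have hXY : (p ^ 3 - p' ^ 3) / 3 - (p ^ 2 - p' ^ 2) / 2 + (p - p') / 2 ≤
        (p1u ^ 3 - p0l ^ 3) / 3 - (p1u ^ 2 - p0l ^ 2) / 2 + (p1u - p0l) / 2 := by
      have hm1' := G_mono h3
      have hm2' := G_mono h1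
      linarith
    have hmul := mul_le_mul_of_nonneg_left hXY (show (0:ℝ) ≤ 2 * b by linarith)
    linarith
  -- compare I * (p - p') with I * Δpl
  have hII : (p - p') * I ≤ Δpl * I := by
    have h := mul_nonneg (show (0:ℝ) ≤ p - p' - Δpl by linarith)
      (show (0:ℝ) ≤ -I by linarith)
    nlinarith
  rw [ge_iff_le, div_le_iff₀ hΔpl0]
  calc ΔY - 2 * b / 3 * (p1u ^ 3 - p0l ^ 3) + b * (p1u ^ 2 - p0l ^ 2) - b * (p1u - p0l)
      ≤ (p - p') * I := by linarith
    _ ≤ Δpl * I := hII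
    _ = I * Δpl := by ring
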